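/- Let w ∈ I_* and s ∈ S with sw ≠ ws*. Then the following are equivalent: ℓ(sw) = ℓ(w)+1; ℓ(ws*) = ℓ(w)+1; ℓ(sws*) = ℓ(w)+2. The same equivalences hold with '+' replaced by '−' throughout. -/

import Mathlib

set_option synthInstance.maxHeartbeats 1000000
set_option maxHeartbeats 2000000

open scoped Classical TensorProduct

noncomputable section

namespace IUIM

/-- The field `ℚ(u)` of rational functions; `u` is `RatFunc.X`. -/
abbrev Fq : Type := RatFunc ℚ

/-- The Laurent polynomial subring `ℤ[u, u⁻¹]` of `ℚ(u)`. -/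
def Ar : Subring Fq := Subring.closure {RatFunc.X, (RatFunc.X)⁻¹}

/-- The subring `A₋₁ = ℤ[u, u⁻¹, (u+1)⁻¹]` of `ℚ(u)`. -/
def Am1 : Subring Fq := Subring.closure {RatFunc.X, (RatFunc.X)⁻¹, (RatFunc.X + 1)⁻¹}

/-- The subring `A±₁ = ℤ[u, u⁻¹, (u+1)⁻¹, (u-1)⁻¹]` of `ℚ(u)`. -/
def Apm : Subring Fq :=
  Subring.closure {RatFunc.X, (RatFunc.X)⁻¹, (RatFunc.X + 1)⁻¹, (RatFunc.X - 1)⁻¹}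

lemma X_mem_Am1 : (RatFunc.X : Fq) ∈ Am1 := Subring.subset_closure (by simp)
lemma X_mem_Apm : (RatFunc.X : Fq) ∈ Apm := Subring.subset_closure (by simp)

/-- `u` as an element of `A±₁`. -/
def uApm : ↥Apm := ⟨RatFunc.X, X_mem_Apm⟩
/-- `u` as an element of `A₋₁`. -/
def uAm1 : ↥Am1 := ⟨RatFunc.X, X_mem_Am1⟩

variable {B W : Type*} [Group W] {M : CoxeterMatrix B} (cs : CoxeterSystem M W) (star : W ≃* W)

/-- The Bruhat order on `W`, via the subword property: `x ≤ w` iff some reduced word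
for `w` contains a reduced word for `x` as a subword. -/
def BruhatLE (x w : W) : Prop :=
  ∃ ω : List B, cs.IsReduced ω ∧ cs.wordProd ω = w ∧
    ∃ ω' : List B, ω'.Sublist ω ∧ cs.IsReduced ω' ∧ cs.wordProd ω' = x

/-- The strict Bruhat order. -/
def BruhatLT (x w : W) : Prop := BruhatLE cs x w ∧ x ≠ w

/-- The twisted product `s ⋉ w`: it is `s*w` if `s*w = w*s^*`, and `s*w*s^*` otherwise. -/
def twMul (i : B) (w : W) : W :=
  if cs.simple i * w = w * star (cs.simple i) then cs.simple i * w
  else cs.simple i * w * star (cs.simple i)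

/-- `twProd [i₁,...,iₖ] = sᵢ₁ ⋉ (sᵢ₂ ⋉ ( ⋯ ⋉ (sᵢₖ ⋉ 1)))`. -/
def twProd (ω : List B) : W := ω.foldr (twMul cs star) 1

/-- The minimal length of an `I⋆`-expression for `w` (the rank function `ρ`). -/
def rho (w : W) : ℕ := sInf {k | ∃ ω : List B, ω.length = k ∧ twProd cs star ω = w}

/-- `ω` is a reduced `I⋆`-expression for `w`: its twisted product is `w` and it has
minimal length among all such expressions. -/
def IsRedI (ω : List B) (w : W) : Prop :=
  twProd cs star ω = w ∧ ∀ ω' : List B, twProd cs star ω' = w → ω.length ≤ ω'.length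

/-- The statistic `ℓ^*` computed from a word `(i₁, …, i_k)`: the number of indices `t`
such that `s_{i_t} w_t = w_t (s_{i_t})^*`, where `w_t = s_{i_t} ⋉ ⋯ ⋉ s_{i_1} ⋉ w` is the
corresponding tail twisted product `s_{i_{t+1}} ⋉ ⋯ ⋉ s_{i_k} ⋉ 1`. -/
def lstarWord : List B → ℕ
  | [] => 0
  | i :: ω =>
      (if cs.simple i * twProd cs star ω = twProd cs star ω * star (cs.simple i) then 1 else 0)
        + lstarWord ω

lemma twMul_mem (hst : ∀ v, star (star v) = v) (i : B) {w : W} (hw : star w = w⁻¹) :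
    star (twMul cs star i w) = (twMul cs star i w)⁻¹ := by
  unfold twMul
  split_ifs with h
  · have h2 : star (cs.simple i) = w⁻¹ * (cs.simple i * w) := by rw [h]; group
    rw [map_mul, hw, h2, mul_inv_rev, cs.inv_simple i]
    group
  · have hs : star (cs.simple i) * star (cs.simple i) = 1 := by
      rw [← map_mul, cs.simple_mul_simple_self, map_one]
    have hsinv : (star (cs.simple i))⁻¹ = star (cs.simple i) := by
      exact (eq_inv_of_mul_eq_one_left hs).symm
    rw [map_mul, map_mul, hw, hst, mul_inv_rev, mul_inv_rev, hsinv, cs.inv_simple i]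
    group

/-- `s ⋉ w` as a twisted involution. -/
def twK (hst : ∀ v, star (star v) = v) (i : B) (z : {w : W // star w = w⁻¹}) :
    {w : W // star w = w⁻¹} :=
  ⟨twMul cs star i z.1, twMul_mem cs star hst i z.2⟩

/-- The identity element as a twisted involution. -/
def oneI : {w : W // star w = w⁻¹} := ⟨1, by simp⟩

/-- `T` is the standard basis of an Iwahori–Hecke algebra with Hecke parameter `u ^ 2`
(over a ground ring `R`, with `u ∈ R`): `T_w T_{w'} = T_{w w'}` whenever lengths add, and
`(T_s + 1)(T_s - u²) = 0` for all simple reflections `s`. -/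
def IsHecke {R H : Type*} [CommRing R] [Ring H] [Algebra R H] (u : R) (T : Module.Basis W R H) :
    Prop :=
  T 1 = 1 ∧
  (∀ x y : W, cs.length (x * y) = cs.length x + cs.length y → T x * T y = T (x * y)) ∧
  (∀ i : B, (T (cs.simple i) + 1) * (T (cs.simple i) - algebraMap R H (u ^ 2)) = 0)

/-- The Lusztig–Vogan rules for the `u`-deformed involution module: the requirements on
the action `act` of the standard basis elements `T_s` on the basis vectors `e z = a_z`
indexed by the twisted involutions. -/
def LVRules {R Mu : Type*} [CommRing R] [AddCommGroup Mu] [Module R Mu]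
    (hst : ∀ v, star (star v) = v) (u : R)
    (e : {w : W // star w = w⁻¹} → Mu) (act : W → Mu → Mu) : Prop :=
  ∀ (i : B) (z : {w : W // star w = w⁻¹}),
    (cs.simple i * z.1 = z.1 * star (cs.simple i) →
        BruhatLT cs z.1 (cs.simple i * z.1) →
      act (cs.simple i) (e z) = u • e z + (u + 1) • e (twK cs star hst i z)) ∧
    (cs.simple i * z.1 = z.1 * star (cs.simple i) →
        BruhatLT cs (cs.simple i * z.1) z.1 →
      act (cs.simple i) (e z) =
        (u ^ 2 - u - 1) • e z + (u ^ 2 - u) • e (twK cs star hst i z)) ∧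
    (cs.simple i * z.1 ≠ z.1 * star (cs.simple i) →
        BruhatLT cs z.1 (cs.simple i * z.1) →
      act (cs.simple i) (e z) = e (twK cs star hst i z)) ∧
    (cs.simple i * z.1 ≠ z.1 * star (cs.simple i) →
        BruhatLT cs (cs.simple i * z.1) z.1 →
      act (cs.simple i) (e z) = (u ^ 2 - 1) • e z + u ^ 2 • e (twK cs star hst i z))

/-- The action of the Hecke algebra on the space `Hh` of all formal (possibly infinite)
sums `∑ c_x T_x`, described in coordinates: the `x`-coordinate of `h • ξ` is
`∑ᶠ y, ξ_y ⬝ (coefficient of T_x in h ⬝ T_y)`. -/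
def IsHatAction {R H : Type*} [CommRing R] [Ring H] [Algebra R H] (T : Module.Basis W R H)
    {Hh : Type*} [AddCommGroup Hh] [Module R Hh] [Module H Hh]
    (coords : Hh ≃ₗ[R] (W → R)) : Prop :=
  ∀ (h : H) (ξ : Hh) (x : W), coords (h • ξ) x = ∑ᶠ y : W, coords ξ y * (T.repr (h * T y) x)

/-- The `R`-span (for a subring `R ⊆ ℚ(u)`) of a family of vectors in a `ℚ(u)`-vector
space; used for the various integral forms. -/
def MA {ι V : Type*} [AddCommGroup V] [Module Fq V] (R : Subring Fq) (v : ι → V) :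
    Submodule (↥R) V :=
  Submodule.span (↥R) (Set.range v)

/-- The canonical element `1 ⊗ v z` of the base change `K ⊗_R (R-span of v)`. -/
def bce {ι V : Type*} [AddCommGroup V] [Module Fq V] (R : Subring Fq) (K : Type*)
    [CommRing K] [Algebra (↥R) K] (v : ι → V) (z : ι) :
    TensorProduct (↥R) K ↥(MA R v) :=
  (1 : K) ⊗ₜ[↥R] (⟨v z, Submodule.subset_span (Set.mem_range_self z)⟩ : ↥(MA R v))

/-- Right multiplication/action on a fixed element `Ξ` (e.g. `X_∅`), as a
`ℚ(u)`-linear map `h ↦ h • Ξ`. -/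
def smulXeF {H V : Type*} [Ring H] [Algebra Fq H] [AddCommGroup V] [Module Fq V]
    [Module H V] [IsScalarTower Fq H V] (Ξ : V) : H →ₗ[Fq] V where
  toFun h := h • Ξ
  map_add' h h' := add_smul h h' Ξ
  map_smul' c h := by simp [smul_assoc]

/-- The integral form `H_{R,u} X_∅`: the image of the `R`-span of the `T_w` under
`h ↦ h • Ξ`. -/
def NX {ι H V : Type*} [Ring H] [Algebra Fq H] [AddCommGroup V] [Module Fq V]
    [Module H V] [IsScalarTower Fq H V] (R : Subring Fq) (Tv : ι → H) (Ξ : V) :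
    Submodule (↥R) V :=
  Submodule.map ((smulXeF Ξ).restrictScalars (↥R)) (Submodule.span (↥R) (Set.range Tv))

/-! ### Auxiliary development: the sign representation on `W × ZMod 2` -/

section SignRep

private lemma conj_eq_iff {G : Type*} [Group G] (q x y : G) :
    q * x * q⁻¹ = y ↔ x = q⁻¹ * y * q := by
  constructor
  · rintro rfl; group
  · rintro rfl; group

private lemma conj_pow_aux {G : Type*} [Group G] {q y : G} (h : q⁻¹ * y = y * q) (l : ℕ) :
    (q⁻¹) ^ l * y * q ^ l = y * q ^ (2 * l) := by
  induction l with
  | zero => simp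
  | succ n ih =>
    calc (q⁻¹) ^ (n + 1) * y * q ^ (n + 1)
        = q⁻¹ * ((q⁻¹) ^ n * y * q ^ n) * q := by group
      _ = q⁻¹ * (y * q ^ (2 * n)) * q := by rw [ih]
      _ = (q⁻¹ * y) * q ^ (2 * n) * q := by group
      _ = (y * q) * q ^ (2 * n) * q := by rw [h]
      _ = y * q ^ (2 * (n + 1)) := by group

private lemma conj_pow_eq_iff {G : Type*} [Group G] {q y : G} (h : q⁻¹ * y = y * q)
    (x : G) (l : ℕ) :
    q ^ l * x * (q⁻¹) ^ l = y ↔ x = y * q ^ (2 * l) := by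
  rw [inv_pow, conj_eq_iff, ← inv_pow, conj_pow_aux h]

private lemma sum_range_two_mul' {Mo : Type*} [AddCommMonoid Mo] (m : ℕ) (f : ℕ → Mo) :
    ∑ l ∈ Finset.range m, (f (2 * l) + f (2 * l + 1)) = ∑ r ∈ Finset.range (2 * m), f r := by
  induction m with
  | zero => simp
  | succ n ih =>
    have h2 : 2 * (n + 1) = (2 * n + 1) + 1 := by ring
    rw [Finset.sum_range_succ, ih, h2, Finset.sum_range_succ, Finset.sum_range_succ]
    abel

/-- The basic involution of `W × ZMod 2` attached to a simple reflection. -/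
private def invmap (i : B) : W × ZMod 2 → W × ZMod 2 :=
  fun p => (cs.simple i * p.1 * (cs.simple i)⁻¹,
    p.2 + if p.1 = cs.simple i then 1 else 0)

private lemma invmap_invol (i : B) : Function.Involutive (invmap cs i) := by
  intro p
  unfold invmap
  dsimp only
  refine Prod.ext ?_ ?_
  · dsimp only
    simp only [cs.inv_simple, mul_assoc, cs.simple_mul_simple_self, mul_one,
      cs.simple_mul_simple_cancel_left]
  · dsimp only
    have hiff : cs.simple i * p.1 * (cs.simple i)⁻¹ = cs.simple i ↔ p.1 = cs.simple i := by
      rw [conj_eq_iff]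
      constructor
      · intro h; rw [h]; group
      · intro h; rw [h]; group
    rw [if_congr hiff rfl rfl]
    split_ifs with h
    · rw [add_assoc, show (1 : ZMod 2) + 1 = 0 by decide, add_zero]
    · simp

/-- The basic involution as a permutation. -/
private def fp (i : B) : Equiv.Perm (W × ZMod 2) := (invmap_invol cs i).toPerm

private lemma fp_apply (i : B) (p : W × ZMod 2) : fp cs i p = invmap cs i p := rfl

private lemma fp_pow_apply (i j : B) (k : ℕ) (p : W × ZMod 2) :
    ((fp cs i * fp cs j) ^ k) p =
      ((cs.simple i * cs.simple j) ^ k * p.1 * ((cs.simple i * cs.simple j)⁻¹) ^ k,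
       p.2 + ∑ l ∈ Finset.range k,
         ((if (cs.simple i * cs.simple j) ^ l * p.1 * ((cs.simple i * cs.simple j)⁻¹) ^ l
              = cs.simple j then (1 : ZMod 2) else 0)
          + (if (cs.simple i * cs.simple j) ^ l * p.1 * ((cs.simple i * cs.simple j)⁻¹) ^ l
              = (cs.simple j)⁻¹ * cs.simple i * cs.simple j then (1 : ZMod 2) else 0))) := by
  induction k with
  | zero => simp
  | succ n ih =>
    rw [pow_succ', Equiv.Perm.mul_apply, ih, Equiv.Perm.mul_apply, fp_apply, fp_apply]
    unfold invmap
    dsimp only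
    refine Prod.ext ?_ ?_
    · dsimp only
      rw [pow_succ' (cs.simple i * cs.simple j) n,
        pow_succ ((cs.simple i * cs.simple j)⁻¹) n, mul_inv_rev]
      simp only [mul_assoc]
    · dsimp only
      rw [if_congr (conj_eq_iff (cs.simple j)
        ((cs.simple i * cs.simple j) ^ n * p.1 * ((cs.simple i * cs.simple j)⁻¹) ^ n)
        (cs.simple i)) rfl rfl, Finset.sum_range_succ]
      abel

private lemma fp_liftable : M.IsLiftable (fp cs) := by
  intro i j
  refine Equiv.ext fun p => ?_
  rw [fp_pow_apply, Equiv.Perm.one_apply]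
  set q := cs.simple i * cs.simple j with hq
  have hqm : q ^ M i j = 1 := cs.simple_mul_simple_pow i j
  have hj : q⁻¹ * cs.simple j = cs.simple j * q := by
    rw [hq, mul_inv_rev, cs.inv_simple, cs.inv_simple]
    group
  have hi : q⁻¹ * cs.simple i = cs.simple i * q := by
    rw [hq, mul_inv_rev, cs.inv_simple, cs.inv_simple]
    calc cs.simple j * cs.simple i * cs.simple i = cs.simple j := by
          rw [mul_assoc, cs.simple_mul_simple_self, mul_one]
      _ = cs.simple i * (cs.simple i * cs.simple j) := by
          rw [cs.simple_mul_simple_cancel_left]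
  have hsiq : cs.simple i * q = cs.simple j := by
    rw [hq, ← mul_assoc, cs.simple_mul_simple_self, one_mul]
  have hA : ∀ l, (q ^ l * p.1 * (q⁻¹) ^ l = cs.simple j) ↔
      (p.1 = cs.simple j * q ^ (2 * l)) := fun l => conj_pow_eq_iff hj p.1 l
  have hB : ∀ l, (q ^ l * p.1 * (q⁻¹) ^ l = (cs.simple j)⁻¹ * cs.simple i * cs.simple j) ↔
      (p.1 = cs.simple j * q ^ (2 * l + 1)) := by
    intro l
    have hv : (cs.simple j)⁻¹ * cs.simple i * cs.simple j = q⁻¹ * cs.simple i * q := by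
      rw [hq]; group
    have hstep : q * (q ^ l * p.1 * (q⁻¹) ^ l) * q⁻¹ = q ^ (l + 1) * p.1 * (q⁻¹) ^ (l + 1) := by
      rw [pow_succ' q l, pow_succ (q⁻¹) l]
      simp only [mul_assoc]
    have hfin : cs.simple i * q ^ (2 * (l + 1)) = cs.simple j * q ^ (2 * l + 1) := by
      rw [show 2 * (l + 1) = 1 + (2 * l + 1) by ring, pow_add, pow_one, ← mul_assoc, hsiq]
    rw [hv, show (q ^ l * p.1 * (q⁻¹) ^ l = q⁻¹ * cs.simple i * q) ↔
        (q * (q ^ l * p.1 * (q⁻¹) ^ l) * q⁻¹ = cs.simple i) from (conj_eq_iff _ _ _).symm,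
      hstep, conj_pow_eq_iff hi p.1 (l + 1), hfin]
  refine Prod.ext ?_ ?_
  · dsimp only
    rw [inv_pow, hqm, inv_one, mul_one, one_mul]
  · dsimp only
    have : ∑ l ∈ Finset.range (M i j),
        ((if q ^ l * p.1 * (q⁻¹) ^ l = cs.simple j then (1 : ZMod 2) else 0)
          + (if q ^ l * p.1 * (q⁻¹) ^ l = (cs.simple j)⁻¹ * cs.simple i * cs.simple j
              then (1 : ZMod 2) else 0)) = 0 := by
      have hcongr : ∀ l ∈ Finset.range (M i j),
          ((if q ^ l * p.1 * (q⁻¹) ^ l = cs.simple j then (1 : ZMod 2) else 0)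
            + (if q ^ l * p.1 * (q⁻¹) ^ l = (cs.simple j)⁻¹ * cs.simple i * cs.simple j
                then (1 : ZMod 2) else 0))
          = ((if p.1 = cs.simple j * q ^ (2 * l) then (1 : ZMod 2) else 0)
            + (if p.1 = cs.simple j * q ^ (2 * l + 1) then (1 : ZMod 2) else 0)) := by
        intro l _
        rw [if_congr (hA l) rfl rfl, if_congr (hB l) rfl rfl]
      rw [Finset.sum_congr rfl hcongr,
        sum_range_two_mul' (M i j) (fun r => if p.1 = cs.simple j * q ^ r then (1 : ZMod 2) else 0),
        two_mul, Finset.sum_range_add]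
      have hshift : ∀ r ∈ Finset.range (M i j),
          (if p.1 = cs.simple j * q ^ (M i j + r) then (1 : ZMod 2) else 0)
          = (if p.1 = cs.simple j * q ^ r then (1 : ZMod 2) else 0) := by
        intro r _
        rw [pow_add, hqm, one_mul]
      rw [Finset.sum_congr rfl hshift]
      exact CharTwo.add_self_eq_zero _
    rw [this, add_zero]

/-- The sign representation. -/
private def prep : W →* Equiv.Perm (W × ZMod 2) := cs.lift ⟨fp cs, fp_liftable cs⟩

private lemma prep_simple (i : B) : prep cs (cs.simple i) = fp cs i :=
  cs.lift_apply_simple (fp_liftable cs) i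

private lemma prep_fst (w t : W) (ε : ZMod 2) : ((prep cs w) (t, ε)).1 = w * t * w⁻¹ := by
  obtain ⟨ω, hred, rfl⟩ : ∃ ω : List B, cs.IsReduced ω ∧ w = cs.wordProd ω :=
    cs.exists_reduced_word' w
  clear hred
  induction ω with
  | nil => simp
  | cons a ω ih =>
    rw [cs.wordProd_cons, map_mul, Equiv.Perm.mul_apply, prep_simple, fp_apply]
    unfold invmap
    dsimp only
    rw [ih]
    group

/-- The inversion–parity statistic. -/
private def eta (w t : W) : ZMod 2 := ((prep cs w) (t, 0)).2

private lemma eta_simple_mul (i : B) (w t : W) :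
    eta cs (cs.simple i * w) t
      = eta cs w t + if w * t * w⁻¹ = cs.simple i then 1 else 0 := by
  unfold eta
  rw [map_mul, Equiv.Perm.mul_apply, prep_simple, fp_apply]
  unfold invmap
  dsimp only
  rw [prep_fst]

private lemma eta_count (ω : List B) (t : W) :
    eta cs (cs.wordProd ω) t = ((cs.rightInvSeq ω).count t : ZMod 2) := by
  induction ω with
  | nil =>
    unfold eta
    rw [cs.wordProd_nil, map_one]
    simp
  | cons a ω ih =>
    rw [cs.wordProd_cons, eta_simple_mul, ih]
    have hris : cs.rightInvSeq (a :: ω)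
        = ((cs.wordProd ω)⁻¹ * cs.simple a * cs.wordProd ω) :: cs.rightInvSeq ω := rfl
    rw [hris, List.count_cons]
    have hiff : ((cs.wordProd ω)⁻¹ * cs.simple a * cs.wordProd ω = t)
        ↔ (cs.wordProd ω * t * (cs.wordProd ω)⁻¹ = cs.simple a) :=
      ⟨fun h => by rw [← h]; group, fun h => by rw [← h]; group⟩
    push_cast
    simp only [beq_iff_eq]
    rw [if_congr hiff rfl rfl]

private lemma eta_of_ascent {w : W} {j : B}
    (h : cs.length (w * cs.simple j) = cs.length w + 1) : eta cs w (cs.simple j) = 0 := by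
  obtain ⟨ω, hred, rfl⟩ : ∃ ω : List B, cs.IsReduced ω ∧ w = cs.wordProd ω :=
    cs.exists_reduced_word' w
  rw [eta_count]
  have hnm : cs.simple j ∉ cs.rightInvSeq ω := by
    intro hm
    have := (cs.isRightInversion_of_mem_rightInvSeq hred hm).2
    omega
  rw [List.count_eq_zero_of_not_mem hnm]
  simp

private lemma eta_of_descent {w : W} {j : B}
    (h : cs.length (w * cs.simple j) + 1 = cs.length w) : eta cs w (cs.simple j) = 1 := by
  obtain ⟨ω, hred, hv⟩ : ∃ ω : List B, cs.IsReduced ω ∧ w * cs.simple j = cs.wordProd ω :=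
    cs.exists_reduced_word' (w * cs.simple j)
  have hw : w = cs.wordProd (ω.concat j) := by
    rw [cs.wordProd_concat, ← hv, cs.simple_mul_simple_cancel_right]
  rw [hw, eta_count, cs.rightInvSeq_concat]
  have hnm : cs.simple j ∉ cs.rightInvSeq ω := by
    intro hm
    have h2 := (cs.isRightInversion_of_mem_rightInvSeq hred hm).2
    rw [← hv, cs.simple_mul_simple_cancel_right] at h2
    omega
  have hcnt : (List.map (⇑(MulAut.conj (cs.simple j))) (cs.rightInvSeq ω)).count (cs.simple j)
      = (cs.rightInvSeq ω).count (cs.simple j) := by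
    have hconj : cs.simple j = (MulAut.conj (cs.simple j)) (cs.simple j) := by
      rw [MulAut.conj_apply]
      group
    nth_rewrite 1 [hconj]
    exact List.count_map_of_injective _ _ (MulAut.conj (cs.simple j)).injective _
  rw [List.concat_eq_append, List.count_append, hcnt,
    List.count_eq_zero_of_not_mem hnm]
  simp

/-- The key lemma: if `w sⱼ > w` but `sᵢ w sⱼ < sᵢ w`, then `sᵢ w = w sⱼ`. -/
private lemma keyA (i j : B) (w : W)
    (h1 : cs.length (w * cs.simple j) = cs.length w + 1)
    (h2 : cs.length (cs.simple i * w * cs.simple j) + 1 = cs.length (cs.simple i * w)) :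
    cs.simple i * w = w * cs.simple j := by
  have e1 : eta cs (cs.simple i * w) (cs.simple j) = 1 := by
    apply eta_of_descent
    exact h2
  have e2 := eta_simple_mul cs i w (cs.simple j)
  rw [eta_of_ascent cs h1, zero_add, e1] at e2
  by_cases hc : w * cs.simple j * w⁻¹ = cs.simple i
  · rw [← hc]
    group
  · rw [if_neg hc] at e2
    exact absurd e2 (by decide)

end SignRep

section StarLength

private lemma star_wordProd (star : W ≃* W)
    (hS : ∀ i : B, ∃ j : B, star (cs.simple i) = cs.simple j) (ω : List B) :
    star (cs.wordProd ω) = cs.wordProd (ω.map fun i => Classical.choose (hS i)) := by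
  induction ω with
  | nil => simp
  | cons a ω ih =>
    rw [cs.wordProd_cons, map_mul, ih, List.map_cons, cs.wordProd_cons]
    exact congrArg (· * _) (Classical.choose_spec (hS a))

private lemma length_star_le (star : W ≃* W)
    (hS : ∀ i : B, ∃ j : B, star (cs.simple i) = cs.simple j) (u : W) :
    cs.length (star u) ≤ cs.length u := by
  obtain ⟨ω, hred, rfl⟩ : ∃ ω : List B, cs.IsReduced ω ∧ u = cs.wordProd ω :=
    cs.exists_reduced_word' u
  rw [star_wordProd cs star hS ω]
  calc cs.length (cs.wordProd (ω.map fun i => Classical.choose (hS i)))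
      ≤ (ω.map fun i => Classical.choose (hS i)).length := cs.length_wordProd_le _
    _ = ω.length := List.length_map _
    _ = cs.length (cs.wordProd ω) := hred.symm

private lemma length_star_eq (star : W ≃* W) (hst : ∀ v : W, star (star v) = v)
    (hS : ∀ i : B, ∃ j : B, star (cs.simple i) = cs.simple j) (u : W) :
    cs.length (star u) = cs.length u := by
  refine le_antisymm (length_star_le cs star hS u) ?_
  have := length_star_le cs star hS (star u)
  rwa [hst] at this

end StarLength

theorem statement7
    {B W : Type*} [Group W] {M : CoxeterMatrix B} (cs : CoxeterSystem M W)
    (star : W ≃* W) (hst : ∀ v : W, star (star v) = v)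
    (hS : ∀ i : B, ∃ j : B, star (cs.simple i) = cs.simple j)
    (w : W) (hw : star w = w⁻¹) (i : B)
    (hne : cs.simple i * w ≠ w * star (cs.simple i)) :
    ((cs.length (cs.simple i * w) = cs.length w + 1 ↔
      cs.length (w * star (cs.simple i)) = cs.length w + 1) ∧
     (cs.length (cs.simple i * w) = cs.length w + 1 ↔
      cs.length (cs.simple i * w * star (cs.simple i)) = cs.length w + 2)) ∧
    ((cs.length (cs.simple i * w) + 1 = cs.length w ↔
      cs.length (w * star (cs.simple i)) + 1 = cs.length w) ∧
     (cs.length (cs.simple i * w) + 1 = cs.length w ↔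
      cs.length (cs.simple i * w * star (cs.simple i)) + 2 = cs.length w)) := by
  obtain ⟨j, hj⟩ := hS i
  rw [hj] at hne ⊢
  have key0 : cs.length (w * cs.simple j) = cs.length (cs.simple i * w) := by
    rw [← hj]
    calc cs.length (w * star (cs.simple i))
        = cs.length (star (w * star (cs.simple i))) :=
          (length_star_eq cs star hst hS _).symm
      _ = cs.length (w⁻¹ * cs.simple i) := by rw [map_mul, hw, hst]
      _ = cs.length ((w⁻¹ * cs.simple i)⁻¹) := (cs.length_inv _).symm
      _ = cs.length (cs.simple i * w) := by rw [mul_inv_rev, inv_inv, cs.inv_simple]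
  have hab := cs.length_simple_mul w i
  have hca := cs.length_mul_simple (cs.simple i * w) j
  refine ⟨⟨?_, ?_⟩, ?_, ?_⟩
  · rw [key0]
  · constructor
    · intro ha
      rcases hca with h | h
      · omega
      · exact absurd (keyA cs i j w (by omega) h) hne
    · intro hc
      rcases hab with h | h
      · exact h
      · rcases hca with h2 | h2 <;> omega
  · rw [key0]
  · constructor
    · intro ha
      rcases hca with h | h
      · exfalso
        have h2' : cs.length (cs.simple i * (cs.simple i * w) * cs.simple j) + 1
            = cs.length (cs.simple i * (cs.simple i * w)) := by
          rw [cs.simple_mul_simple_cancel_left]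
          omega
        have e := keyA cs i j (cs.simple i * w) h h2'
        rw [cs.simple_mul_simple_cancel_left] at e
        have e2 := congrArg (· * cs.simple j) e
        rw [cs.simple_mul_simple_cancel_right] at e2
        exact hne e2.symm
      · omega
    · intro hc
      rcases hab with h | h
      · rcases hca with h2 | h2 <;> omega
      · exact h

end IUIM
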